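/- Let Λ = HahnSeries ℝ ℂ be the Novikov field and let f : ℝ →₀ Λ be a nonzero finitely supported function, regarded as the finite formal sum Σ_{r ∈ f.support} f(r)·z^r ∈ Λ[z^ℝ]. If t₀ ∈ ℝ satisfies Σ_{r ∈ f.support} f(r) · HahnSeries.single (t₀·r) 1 = 0, then there exists ε > 0 such that for every t ∈ ℝ with 0 < |t − t₀| < ε one has Σ_{r ∈ f.support} f(r) · HahnSeries.single (t·r) 1 ≠ 0; in other words, the zeros of t ↦ f(T^t) are isolated. -/

import Mathlib

/-- The Novikov field `Λ = ℂ((T^ℝ))`, realized as Hahn series. -/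
local notation "Λ" => HahnSeries ℝ ℂ

/-- If the specialization at `t` vanishes, two distinct exponents in the support must have
equal "valuations" `(f r).order + t * r`. -/
lemma spec_zero_collision (f : ℝ →₀ Λ) (hf : f ≠ 0) (t : ℝ)
    (h : ∑ r ∈ f.support, f r * HahnSeries.single (t * r) (1 : ℂ) = 0) :
    ∃ r ∈ f.support, ∃ r' ∈ f.support, r ≠ r' ∧
      (f r).order + t * r = (f r').order + t * r' := by
  have hne : f.support.Nonempty := Finsupp.support_nonempty_iff.mpr hf
  obtain ⟨r₀, hr₀, hmin⟩ :=
    f.support.exists_min_image (fun r => (f r).order + t * r) hne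
  by_contra hc
  push_neg at hc
  -- the coefficient of the sum at the minimal order is the leading coeff of `f r₀`
  have hcoeff := congrArg (HahnSeries.coeff.addMonoidHom ((f r₀).order + t * r₀)) h
  rw [map_sum, map_zero] at hcoeff
  have hterm : ∀ r ∈ f.support,
      (HahnSeries.coeff.addMonoidHom ((f r₀).order + t * r₀)) (f r * HahnSeries.single (t * r) 1)
        = if r = r₀ then (f r₀).coeff (f r₀).order else 0 := by
    intro r hr
    simp only [HahnSeries.coeff.addMonoidHom_apply]
    by_cases hrr : r = r₀
    · subst hrr
      rw [HahnSeries.coeff_mul_single_add, mul_one, if_pos rfl]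
    · rw [if_neg hrr]
      have hlt : (f r₀).order + t * r₀ - t * r < (f r).order := by
        have h1 : (f r₀).order + t * r₀ ≤ (f r).order + t * r := hmin r hr
        have h2 : (f r₀).order + t * r₀ ≠ (f r).order + t * r :=
          hc r₀ hr₀ r hr (Ne.symm hrr)
        have := lt_of_le_of_ne h1 h2
        linarith
      have : ((f r₀).order + t * r₀ - t * r) + t * r = (f r₀).order + t * r₀ := by ring
      rw [← this, HahnSeries.coeff_mul_single_add, mul_one,
        HahnSeries.coeff_eq_zero_of_lt_order hlt]
  rw [Finset.sum_congr rfl hterm, Finset.sum_ite_eq' f.support r₀ _, if_pos hr₀] at hcoeff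
  exact HahnSeries.coeff_order_eq_zero.not.2 (Finsupp.mem_support_iff.mp hr₀) hcoeff

/-- **Zeros of the specialization of a finite Novikov sum are isolated.**
If `f : ℝ →₀ Λ` is a nonzero finite formal sum `Σ_r f(r)·z^r ∈ Λ[z^ℝ]` and the
specialization `f(T^{t₀}) = Σ_r f(r)·T^{t₀·r}` vanishes, then there exists `ε > 0` such
that `f(T^t) ≠ 0` for all `t` with `0 < |t - t₀| < ε`. -/
theorem isolated_zeros_of_specialization (f : ℝ →₀ Λ) (hf : f ≠ 0) (t₀ : ℝ)
    (h : ∑ r ∈ f.support, f r * HahnSeries.single (t₀ * r) (1 : ℂ) = 0) :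
    ∃ ε : ℝ, 0 < ε ∧ ∀ t : ℝ, 0 < |t - t₀| → |t - t₀| < ε →
      ∑ r ∈ f.support, f r * HahnSeries.single (t * r) (1 : ℂ) ≠ 0 := by
  classical
  -- the finite set of "bad" parameters where two valuations collide
  set B : Finset ℝ := (f.support ×ˢ f.support).image
    (fun p => ((f p.2).order - (f p.1).order) / (p.1 - p.2)) with hB
  have hmem : ∀ t : ℝ,
      (∑ r ∈ f.support, f r * HahnSeries.single (t * r) (1 : ℂ)) = 0 → t ∈ B := by
    intro t ht
    obtain ⟨r, hr, r', hr', hrr, heq⟩ := spec_zero_collision f hf t ht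
    refine Finset.mem_image.mpr ⟨(r, r'), Finset.mem_product.mpr ⟨hr, hr'⟩, ?_⟩
    have hsub : r - r' ≠ 0 := sub_ne_zero.mpr hrr
    field_simp
    linarith [heq]
  set C : Finset ℝ := (B.erase t₀).image (fun b => |b - t₀|) with hC
  have hCpos : ∀ c ∈ C, 0 < c := by
    intro c hc
    obtain ⟨b, hb, rfl⟩ := Finset.mem_image.mp hc
    have : b ≠ t₀ := Finset.ne_of_mem_erase hb
    exact abs_pos.mpr (sub_ne_zero.mpr this)
  by_cases hCe : C.Nonempty
  · refine ⟨C.min' hCe, hCpos _ (C.min'_mem hCe), fun t htp hte hzero => ?_⟩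
    have htB : t ∈ B := hmem t hzero
    have htne : t ≠ t₀ := fun hEq => by simp [hEq] at htp
    have : |t - t₀| ∈ C := Finset.mem_image.mpr ⟨t, Finset.mem_erase.mpr ⟨htne, htB⟩, rfl⟩
    exact absurd (C.min'_le _ this) (not_le.mpr hte)
  · refine ⟨1, one_pos, fun t htp hte hzero => ?_⟩
    have htB : t ∈ B := hmem t hzero
    have htne : t ≠ t₀ := fun hEq => by simp [hEq] at htp
    exact hCe ⟨|t - t₀|, Finset.mem_image.mpr ⟨t, Finset.mem_erase.mpr ⟨htne, htB⟩, rfl⟩⟩
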